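/- For every natural number n ≥ 3, the subfield of ℂ generated over ℚ by i·cos(π/n) has degree over ℚ equal to Euler's totient φ(n). -/

import Mathlib

open Polynomial IntermediateField
set_option synthInstance.maxHeartbeats 800000
set_option maxHeartbeats 1600000

lemma minpoly_natDegree_two {F L : Type*} [Field F] [Field L] [Algebra F L]
    {x : L} (q : F[X]) (hq : q.Monic) (hdeg : q.natDegree = 2)
    (hroot : Polynomial.aeval x q = 0) (hx : x ∉ (algebraMap F L).range) :
    (minpoly F x).natDegree = 2 := by
  have hint : IsIntegral F x := ⟨q, hq, hroot⟩
  have hdvd : minpoly F x ∣ q := minpoly.dvd F x hroot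
  have hq0 : q ≠ 0 := hq.ne_zero
  have h2 : (minpoly F x).natDegree ≤ 2 := hdeg ▸ Polynomial.natDegree_le_of_dvd hdvd hq0
  have h1 : 0 < (minpoly F x).natDegree := minpoly.natDegree_pos hint
  have hne : (minpoly F x).natDegree ≠ 1 := fun h => hx (minpoly.natDegree_eq_one_iff.mp h)
  omega

lemma degree_lin_lt {F : Type*} [Field F] (b d : F) :
    (C b * X + C d).degree < ((X : F[X]) ^ 2).degree := by
  rw [degree_X_pow]
  exact lt_of_le_of_lt degree_linear_le (by decide)

lemma monic_quad' {F : Type*} [Field F] (b d : F) :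
    (X ^ 2 + (C b * X + C d) : F[X]).Monic :=
  (monic_X_pow 2).add_of_left (degree_lin_lt b d)

lemma natDegree_quad' {F : Type*} [Field F] (b d : F) :
    (X ^ 2 + (C b * X + C d) : F[X]).natDegree = 2 := by
  have h := degree_add_eq_left_of_degree_lt (degree_lin_lt b d)
  rw [degree_X_pow] at h
  exact natDegree_eq_of_degree_eq_some h

/-- The subfield of real numbers, as an intermediate field of `ℂ / ℚ`. -/
noncomputable def realIF : IntermediateField ℚ ℂ :=
  { Complex.ofRealHom.fieldRange with
    algebraMap_mem' := fun q => ⟨(q : ℝ), by simp⟩ }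

lemma im_eq_zero_of_mem_realIF {x : ℂ} (hx : x ∈ realIF) : x.im = 0 := by
  obtain ⟨r, hr⟩ := hx
  simp [← hr, Complex.ofRealHom_eq_coe]

/-- The invariant trace field `K n`: the subfield of `ℂ` generated over `ℚ`
by `i * cos (π / n)`. -/
noncomputable def pretzelTraceField (n : ℕ) : IntermediateField ℚ ℂ :=
  IntermediateField.adjoin ℚ {Complex.I * (Real.cos (Real.pi / n) : ℂ)}

theorem finrank_pretzelTraceField (n : ℕ) (hn : 3 ≤ n) :
    Module.finrank ℚ (pretzelTraceField n) = Nat.totient n := by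
  have hn0 : (n : ℝ) ≠ 0 := by positivity
  have hn3 : (3 : ℝ) ≤ (n : ℝ) := by exact_mod_cast hn
  set t : ℝ := 2 * Real.pi / n with ht
  set cR : ℝ := Real.cos t with hcR
  set c : ℂ := (cR : ℂ) with hc
  set ζ : ℂ := Complex.exp (2 * Real.pi * Complex.I / n) with hζdef
  have hζ : IsPrimitiveRoot ζ n := Complex.isPrimitiveRoot_exp n (by omega)
  set α : ℂ := Complex.I * (Real.cos (Real.pi / n) : ℂ) with hα
  set E : IntermediateField ℚ ℂ := IntermediateField.adjoin ℚ {c} with hE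
  set F : IntermediateField ℚ ℂ := IntermediateField.adjoin ℚ {ζ} with hF
  have hζt : ζ = Complex.exp ((t : ℂ) * Complex.I) := by
    rw [hζdef, ht]
    congr 1
    push_cast
    ring
  have hsum : ζ + ζ⁻¹ = 2 * c := by
    rw [hζt, ← Complex.exp_neg, ← neg_mul, ← Complex.two_cos, hc, hcR, Complex.ofReal_cos]
  have hζne : ζ ≠ 0 := by rw [hζt]; exact Complex.exp_ne_zero _
  have hα2 : α ^ 2 = -(1 + c) / 2 := by
    rw [hα]
    have h1 : Real.cos (Real.pi / n) ^ 2 = 1 / 2 + Real.cos (2 * (Real.pi / n)) / 2 :=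
      Real.cos_sq _
    have h2 : 2 * (Real.pi / n) = t := by rw [ht]; ring
    rw [h2] at h1
    have h3 : ((Real.cos (Real.pi / n) : ℂ)) ^ 2 = 1 / 2 + c / 2 := by
      rw [← Complex.ofReal_pow, h1, hc, hcR]; push_cast; ring
    rw [mul_pow, Complex.I_sq, h3]; ring
  -- memberships
  have hαK : α ∈ pretzelTraceField n := subset_adjoin ℚ _ rfl
  have hcK : c ∈ pretzelTraceField n := by
    have h : c = -(α ^ 2 + α ^ 2 + 1) := by rw [hα2]; ring
    rw [h]
    exact neg_mem (add_mem (add_mem (pow_mem hαK 2) (pow_mem hαK 2)) (one_mem _))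
  have hζF : ζ ∈ F := subset_adjoin ℚ _ rfl
  have h2F : (2 : ℂ) ∈ F := by
    have := add_mem (one_mem F) (one_mem F)
    rw [one_add_one_eq_two] at this
    exact this
  have hcF : c ∈ F := by
    have h : c = (ζ + ζ⁻¹) / 2 := by rw [hsum]; ring
    rw [h]
    exact div_mem (add_mem hζF (inv_mem hζF)) h2F
  have hEK : E ≤ pretzelTraceField n := by
    rw [hE, adjoin_le_iff]; exact Set.singleton_subset_iff.mpr hcK
  have hEF : E ≤ F := by
    rw [hE, adjoin_le_iff]; exact Set.singleton_subset_iff.mpr hcF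
  have hER : E ≤ realIF := by
    rw [hE, adjoin_le_iff]
    exact Set.singleton_subset_iff.mpr ⟨cR, rfl⟩
  -- ζ ∉ E
  have hζE : ζ ∉ E := by
    intro h
    have him : ζ.im = 0 := im_eq_zero_of_mem_realIF (hER h)
    rw [hζt, Complex.exp_ofReal_mul_I_im] at him
    have h0 : 0 < t := by rw [ht]; positivity
    have h1 : t < Real.pi := by
      rw [ht, div_lt_iff₀ (by positivity)]
      nlinarith [Real.pi_pos]
    exact (Real.sin_pos_of_pos_of_lt_pi h0 h1).ne' him
  -- α ∉ E
  have hαE : α ∉ E := by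
    intro h
    have him : α.im = 0 := im_eq_zero_of_mem_realIF (hER h)
    rw [hα] at him
    simp only [Complex.mul_im, Complex.I_re, Complex.I_im, Complex.ofReal_re,
      Complex.ofReal_im, zero_mul, one_mul, mul_zero, add_zero, zero_add] at him
    have h0 : 0 < Real.pi / n := by positivity
    have h1 : Real.pi / n < Real.pi / 2 := by
      apply div_lt_div_of_pos_left Real.pi_pos (by norm_num)
      linarith
    have := Real.cos_pos_of_mem_Ioo ⟨by linarith, h1⟩
    linarith
  set cE : E := ⟨c, subset_adjoin ℚ _ rfl⟩ with hcE
  have hmapc : algebraMap E ℂ cE = c := rfl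
  have hintζ : IsIntegral E ζ := (hζ.isIntegral (by omega)).tower_top
  -- relfinrank E F = 2
  have hrelF : relfinrank E F = 2 := by
    rw [relfinrank_eq_finrank_of_le hEF, extendScalars_adjoin hEF,
      adjoin.finrank hintζ]
    refine minpoly_natDegree_two (X ^ 2 + (C (-(cE + cE)) * X + C 1))
      (monic_quad' _ _) (natDegree_quad' _ _) ?_ ?_
    · have hunit : ζ * ζ⁻¹ = 1 := mul_inv_cancel₀ hζne
      simp only [map_add, map_mul, map_pow, map_neg, map_one, aeval_X, aeval_C, hmapc]
      linear_combination ζ * hsum - hunit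
    · rintro ⟨y, hy⟩
      exact hζE (hy ▸ y.2)
  -- relfinrank E K = 2
  have haroot : Polynomial.aeval α (X ^ 2 + (C 0 * X + C ((1 + cE) / 2)) : (↥E)[X]) = 0 := by
    simp only [map_add, map_mul, map_pow, map_div₀, map_one, map_zero, map_ofNat, zero_mul, zero_add,
      aeval_X, aeval_C, hmapc]
    rw [hα2]; ring
  have hintα : IsIntegral E α :=
    ⟨X ^ 2 + (C 0 * X + C ((1 + cE) / 2)), monic_quad' _ _, by rwa [aeval_def] at haroot⟩
  have hrelK : relfinrank E (pretzelTraceField n) = 2 := by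
    rw [relfinrank_eq_finrank_of_le hEK]
    erw [extendScalars_adjoin hEK]
    rw [adjoin.finrank hintα]
    refine minpoly_natDegree_two (X ^ 2 + (C 0 * X + C ((1 + cE) / 2)))
      (monic_quad' _ _) (natDegree_quad' _ _) ?_ ?_
    · exact haroot
    · rintro ⟨y, hy⟩
      exact hαE (hy ▸ y.2)
  -- finrank ℚ F = totient n
  have hFrank : Module.finrank ℚ F = Nat.totient n := by
    rw [hF, adjoin.finrank (hζ.isIntegral (by omega)).tower_top,
      ← Polynomial.cyclotomic_eq_minpoly_rat hζ (by omega), natDegree_cyclotomic]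
  -- combine
  have e1 := finrank_bot_mul_relfinrank hEF
  have e2 := finrank_bot_mul_relfinrank hEK
  rw [hrelF, hFrank] at e1
  rw [hrelK] at e2
  omega
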